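/- Let V₁ ⊆ ℂ be an open set, let φ, α : V₁ → ℝ be C² functions with Δφ ≥ 0 (φ subharmonic), Δα ≤ 0 (α superharmonic), and φ(z) < α(z) for all z ∈ V₁. For each integer n ≥ 0 define λ_n(z) = −log( (π/(n+1)) (e^{−(2n+2)φ(z)} − e^{−(2n+2)α(z)}) ). Then λ_n is C² and Δλ_n ≥ 0 on V₁, i.e., λ_n is subharmonic on V₁. -/

import Mathlib

/-- The Laplacian `Δf = ∂²f/∂x² + ∂²f/∂y²` of `f : ℂ → ℝ`, expressed via the second
(iterated Fréchet) derivative in the directions `1` and `i`. -/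
noncomputable def lap (f : ℂ → ℝ) (z : ℂ) : ℝ :=
  iteratedFDeriv ℝ 2 f z ![1, 1] + iteratedFDeriv ℝ 2 f z ![Complex.I, Complex.I]

lemma iteratedFDeriv_two_self (f : ℂ → ℝ) (z v : ℂ) (hf : ContDiffAt ℝ 2 f z) :
    iteratedFDeriv ℝ 2 f z ![v, v] = fderiv ℝ (fun w => fderiv ℝ f w v) z v := by
  have hdf : DifferentiableAt ℝ (fderiv ℝ f) z :=
    (hf.fderiv_right (m := 1) (by norm_num)).differentiableAt one_ne_zero
  have h2 : fderiv ℝ (fun w => fderiv ℝ f w v) z = (fderiv ℝ (fderiv ℝ f) z).flip v := by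
    rw [fderiv_clm_apply hdf (differentiableAt_const v)]
    ext w; simp
  rw [iteratedFDeriv_two_apply, h2]
  simp

lemma diff_dirderiv (f : ℂ → ℝ) (z v : ℂ) (hf : ContDiffAt ℝ 2 f z) :
    DifferentiableAt ℝ (fun w => fderiv ℝ f w v) z := by
  have hdf : DifferentiableAt ℝ (fderiv ℝ f) z :=
    (hf.fderiv_right (m := 1) (by norm_num)).differentiableAt one_ne_zero
  exact hdf.clm_apply (differentiableAt_const v)

lemma fderiv_lam (k c : ℝ) (φ α : ℂ → ℝ) (w v : ℂ)
    (hφ : DifferentiableAt ℝ φ w) (hα : DifferentiableAt ℝ α w)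
    (hu : Real.exp (-k * φ w) - Real.exp (-k * α w) ≠ 0) (hc : c ≠ 0) :
    fderiv ℝ (fun z => -Real.log (c * (Real.exp (-k * φ z) - Real.exp (-k * α z)))) w v
      = (k * Real.exp (-k * φ w) * fderiv ℝ φ w v - k * Real.exp (-k * α w) * fderiv ℝ α w v)
        / (Real.exp (-k * φ w) - Real.exp (-k * α w)) := by
  have hA : HasFDerivAt (fun z => Real.exp (-k * φ z))
      (Real.exp (-k * φ w) • ((-k) • fderiv ℝ φ w)) w :=
    (hφ.hasFDerivAt.const_mul (-k)).exp
  have hB : HasFDerivAt (fun z => Real.exp (-k * α z))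
      (Real.exp (-k * α w) • ((-k) • fderiv ℝ α w)) w :=
    (hα.hasFDerivAt.const_mul (-k)).exp
  have hg : c * (Real.exp (-k * φ w) - Real.exp (-k * α w)) ≠ 0 := mul_ne_zero hc hu
  have hlog := ((((hA.sub hB).const_mul c).log hg).neg).fderiv
  rw [HasFDerivAt.fderiv (f := fun z => -Real.log (c * (Real.exp (-k * φ z) - Real.exp (-k * α z))))
    ((((hA.sub hB).const_mul c).log hg).neg)]
  simp only [ContinuousLinearMap.neg_apply, ContinuousLinearMap.coe_smul',
    Pi.smul_apply, ContinuousLinearMap.sub_apply, smul_eq_mul, Pi.sub_apply]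
  have hu' : Real.exp (-(k * φ w)) - Real.exp (-(k * α w)) ≠ 0 := by
    simpa [neg_mul] using hu
  field_simp
  ring

lemma lam_contDiffOn (k c : ℝ) (V₁ : Set ℂ) (φ α : ℂ → ℝ)
    (hφ : ContDiffOn ℝ 2 φ V₁) (hα : ContDiffOn ℝ 2 α V₁)
    (hu : ∀ z ∈ V₁, Real.exp (-k * φ z) - Real.exp (-k * α z) ≠ 0) (hc : c ≠ 0) :
    ContDiffOn ℝ 2
      (fun z => -Real.log (c * (Real.exp (-k * φ z) - Real.exp (-k * α z)))) V₁ := by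
  have h1 : ContDiffOn ℝ 2 (fun z => c * (Real.exp (-k * φ z) - Real.exp (-k * α z))) V₁ :=
    contDiffOn_const.mul (((contDiffOn_const.mul hφ).exp).sub ((contDiffOn_const.mul hα).exp))
  exact (h1.log (fun z hz => mul_ne_zero hc (hu z hz))).neg

lemma second_formula (k c : ℝ) (V₁ : Set ℂ) (hV₁ : IsOpen V₁)
    (φ α : ℂ → ℝ) (hφ : ContDiffOn ℝ 2 φ V₁) (hα : ContDiffOn ℝ 2 α V₁)
    (hu : ∀ w ∈ V₁, Real.exp (-k * φ w) - Real.exp (-k * α w) ≠ 0) (hc : c ≠ 0)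
    (z : ℂ) (hz : z ∈ V₁) (v : ℂ) :
    iteratedFDeriv ℝ 2
        (fun z => -Real.log (c * (Real.exp (-k * φ z) - Real.exp (-k * α z)))) z ![v, v]
      = (((k * Real.exp (-k * φ z) * iteratedFDeriv ℝ 2 φ z ![v, v]
            - k * Real.exp (-k * α z) * iteratedFDeriv ℝ 2 α z ![v, v])
          - k ^ 2 * (Real.exp (-k * φ z) * (fderiv ℝ φ z v) ^ 2
            - Real.exp (-k * α z) * (fderiv ℝ α z v) ^ 2))
          * (Real.exp (-k * φ z) - Real.exp (-k * α z))
        + k ^ 2 * (Real.exp (-k * φ z) * fderiv ℝ φ z v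
            - Real.exp (-k * α z) * fderiv ℝ α z v) ^ 2)
        / (Real.exp (-k * φ z) - Real.exp (-k * α z)) ^ 2 := by
  have hzn : V₁ ∈ nhds z := hV₁.mem_nhds hz
  have hφz : ContDiffAt ℝ 2 φ z := hφ.contDiffAt hzn
  have hαz : ContDiffAt ℝ 2 α z := hα.contDiffAt hzn
  have hF : ContDiffAt ℝ 2
      (fun z => -Real.log (c * (Real.exp (-k * φ z) - Real.exp (-k * α z)))) z :=
    (lam_contDiffOn k c V₁ φ α hφ hα hu hc).contDiffAt hzn
  rw [iteratedFDeriv_two_self _ z v hF]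
  -- replace the inner fderiv by the explicit formula, eventually near z
  have heq : (fun w => fderiv ℝ
        (fun z => -Real.log (c * (Real.exp (-k * φ z) - Real.exp (-k * α z)))) w v)
      =ᶠ[nhds z] (fun w =>
        (k * Real.exp (-k * φ w) * fderiv ℝ φ w v - k * Real.exp (-k * α w) * fderiv ℝ α w v)
        / (Real.exp (-k * φ w) - Real.exp (-k * α w))) := by
    filter_upwards [hV₁.mem_nhds hz] with w hw
    exact fderiv_lam k c φ α w v
      ((hφ.contDiffAt (hV₁.mem_nhds hw)).differentiableAt (by norm_num))
      ((hα.contDiffAt (hV₁.mem_nhds hw)).differentiableAt (by norm_num))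
      (hu w hw) hc
  rw [heq.fderiv_eq]
  -- now compute the derivative of the explicit quotient
  have hφd : DifferentiableAt ℝ φ z := hφz.differentiableAt (by norm_num)
  have hαd : DifferentiableAt ℝ α z := hαz.differentiableAt (by norm_num)
  have hA : HasFDerivAt (fun w => Real.exp (-k * φ w))
      (Real.exp (-k * φ z) • ((-k) • fderiv ℝ φ z)) z :=
    (hφd.hasFDerivAt.const_mul (-k)).exp
  have hB : HasFDerivAt (fun w => Real.exp (-k * α w))
      (Real.exp (-k * α z) • ((-k) • fderiv ℝ α z)) z :=
    (hαd.hasFDerivAt.const_mul (-k)).exp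
  have hDφ : HasFDerivAt (fun w => fderiv ℝ φ w v)
      (fderiv ℝ (fun w => fderiv ℝ φ w v) z) z :=
    (diff_dirderiv φ z v hφz).hasFDerivAt
  have hDα : HasFDerivAt (fun w => fderiv ℝ α w v)
      (fderiv ℝ (fun w => fderiv ℝ α w v) z) z :=
    (diff_dirderiv α z v hαz).hasFDerivAt
  have hNum := ((hA.const_mul k).mul hDφ).sub ((hB.const_mul k).mul hDα)
  have hDen := hA.sub hB
  have huz := hu z hz
  have hInv : HasFDerivAt (fun w => (Real.exp (-k * φ w) - Real.exp (-k * α w))⁻¹)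
      ((ContinuousLinearMap.smulRight (1 : ℝ →L[ℝ] ℝ)
          (-((Real.exp (-k * φ z) - Real.exp (-k * α z)) ^ 2)⁻¹)).comp
        (Real.exp (-k * φ z) • ((-k) • fderiv ℝ φ z)
          - Real.exp (-k * α z) • ((-k) • fderiv ℝ α z))) z :=
    (hasFDerivAt_inv huz).comp z hDen
  have hH := hNum.mul hInv
  have hfin : (fun w =>
      (k * Real.exp (-k * φ w) * fderiv ℝ φ w v - k * Real.exp (-k * α w) * fderiv ℝ α w v)
        / (Real.exp (-k * φ w) - Real.exp (-k * α w)))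
      = (fun w =>
      (k * Real.exp (-k * φ w) * fderiv ℝ φ w v - k * Real.exp (-k * α w) * fderiv ℝ α w v)
        * (Real.exp (-k * φ w) - Real.exp (-k * α w))⁻¹) := by
    funext w; rw [div_eq_mul_inv]
  rw [hfin, HasFDerivAt.fderiv (f := fun w =>
      (k * Real.exp (-k * φ w) * fderiv ℝ φ w v - k * Real.exp (-k * α w) * fderiv ℝ α w v)
        * (Real.exp (-k * φ w) - Real.exp (-k * α w))⁻¹) hH]
  rw [iteratedFDeriv_two_self φ z v hφz, iteratedFDeriv_two_self α z v hαz]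
  simp only [ContinuousLinearMap.add_apply, ContinuousLinearMap.coe_smul',
    Pi.smul_apply, ContinuousLinearMap.sub_apply, ContinuousLinearMap.comp_apply,
    ContinuousLinearMap.smulRight_apply, ContinuousLinearMap.one_apply,
    smul_eq_mul, ContinuousLinearMap.neg_apply, Pi.mul_apply, Pi.sub_apply]
  have hu2 : Real.exp (-(k * φ z)) - Real.exp (-(k * α z)) ≠ 0 := by
    simpa [neg_mul] using huz
  field_simp
  ring

theorem lambda_n_subharmonic' (V₁ : Set ℂ) (hV₁ : IsOpen V₁) (φ α : ℂ → ℝ)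
    (hφ : ContDiffOn ℝ 2 φ V₁) (hα : ContDiffOn ℝ 2 α V₁)
    (hφ_sub : ∀ z ∈ V₁, 0 ≤ lap φ z) (hα_super : ∀ z ∈ V₁, lap α z ≤ 0)
    (hφα : ∀ z ∈ V₁, φ z < α z) (n : ℕ) :
    ContDiffOn ℝ 2
      (fun z => -Real.log (Real.pi / ((n : ℝ) + 1) *
        (Real.exp (-(2 * (n : ℝ) + 2) * φ z) - Real.exp (-(2 * (n : ℝ) + 2) * α z)))) V₁ ∧
    ∀ z ∈ V₁,
      0 ≤ lap (fun z => -Real.log (Real.pi / ((n : ℝ) + 1) *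
        (Real.exp (-(2 * (n : ℝ) + 2) * φ z) - Real.exp (-(2 * (n : ℝ) + 2) * α z)))) z := by
  set k : ℝ := 2 * (n : ℝ) + 2 with hk_def
  set c : ℝ := Real.pi / ((n : ℝ) + 1) with hc_def
  have hk : (0 : ℝ) < k := by positivity
  have hc : (0 : ℝ) < c := by
    have := Real.pi_pos
    positivity
  have hupos : ∀ z ∈ V₁, 0 < Real.exp (-k * φ z) - Real.exp (-k * α z) := by
    intro z hz
    have h1 : -k * α z < -k * φ z := by
      have := hφα z hz
      nlinarith
    simpa [sub_pos] using Real.exp_lt_exp.2 h1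
  have hu : ∀ z ∈ V₁, Real.exp (-k * φ z) - Real.exp (-k * α z) ≠ 0 :=
    fun z hz => ne_of_gt (hupos z hz)
  constructor
  · exact lam_contDiffOn k c V₁ φ α hφ hα hu (ne_of_gt hc)
  · intro z hz
    have h1 := second_formula k c V₁ hV₁ φ α hφ hα hu (ne_of_gt hc) z hz 1
    have h2 := second_formula k c V₁ hV₁ φ α hφ hα hu (ne_of_gt hc) z hz Complex.I
    unfold lap at hφ_sub hα_super ⊢
    rw [h1, h2, ← add_div]
    set a := Real.exp (-k * φ z)
    set b := Real.exp (-k * α z)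
    have ha : 0 < a := Real.exp_pos _
    have hb : 0 < b := Real.exp_pos _
    have hab : 0 < a - b := hupos z hz
    set s1 := iteratedFDeriv ℝ 2 φ z ![1, 1]
    set s2 := iteratedFDeriv ℝ 2 φ z ![Complex.I, Complex.I]
    set t1 := iteratedFDeriv ℝ 2 α z ![1, 1]
    set t2 := iteratedFDeriv ℝ 2 α z ![Complex.I, Complex.I]
    set p1 := fderiv ℝ φ z 1
    set p2 := fderiv ℝ φ z Complex.I
    set q1 := fderiv ℝ α z 1
    set q2 := fderiv ℝ α z Complex.I
    have hlφ : 0 ≤ s1 + s2 := hφ_sub z hz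
    have hlα : t1 + t2 ≤ 0 := hα_super z hz
    apply div_nonneg _ (by positivity)
    have hid : (k * a * s1 - k * b * t1 - k ^ 2 * (a * p1 ^ 2 - b * q1 ^ 2)) * (a - b)
          + k ^ 2 * (a * p1 - b * q1) ^ 2
        + ((k * a * s2 - k * b * t2 - k ^ 2 * (a * p2 ^ 2 - b * q2 ^ 2)) * (a - b)
          + k ^ 2 * (a * p2 - b * q2) ^ 2)
        = k * (a - b) * (a * (s1 + s2) - b * (t1 + t2))
          + k ^ 2 * a * b * ((p1 - q1) ^ 2 + (p2 - q2) ^ 2) := by ring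
    rw [hid]
    have h3 : 0 ≤ a * (s1 + s2) - b * (t1 + t2) := by nlinarith
    have h4 : 0 ≤ k * (a - b) * (a * (s1 + s2) - b * (t1 + t2)) := by positivity
    have h5 : 0 ≤ k ^ 2 * a * b * ((p1 - q1) ^ 2 + (p2 - q2) ^ 2) := by positivity
    linarith
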